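/- Let a, T > 0, φ : ℝ → (-a,a) a homeomorphism with φ(0)=0, f : [0,T]×ℝ×ℝ → ℝ continuous, and c : [0,T] → ℝ continuous with f(t,x,y) ≥ c(t) for all (t,x,y). Suppose u : [0,T] → ℝ is C¹ with φ∘u' continuously differentiable, (φ(u'))' = λ N_f(u) for some λ ∈ [0,1], ∫₀ᵀ f(t,u(t),u'(t))dt = 0, and there exist M₁ < M₂ and ω ∈ [0,T] with M₁ < u'(ω) < M₂. Then for all t ∈ [0,T], |φ(u'(t))| < L + 2‖c⁻‖_{L¹}, where L = max{|φ(M₁)|, |φ(M₂)|} and c⁻ = max{-c, 0}. -/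

import Mathlib

open MeasureTheory intervalIntegral Set

theorem stmt_5 (a T : ℝ) (ha : 0 < a) (hT : 0 < T)
    (φ ψ : ℝ → ℝ) (hφc : Continuous φ) (hψc : Continuous ψ)
    (hmem : ∀ x, φ x ∈ Set.Ioo (-a) a)
    (hinv1 : ∀ x, ψ (φ x) = x)
    (hinv2 : ∀ y ∈ Set.Ioo (-a) a, φ (ψ y) = y)
    (hφ0 : φ 0 = 0)
    (f : ℝ → ℝ → ℝ → ℝ)
    (hf : Continuous fun p : ℝ × ℝ × ℝ => f p.1 p.2.1 p.2.2)
    (c : ℝ → ℝ) (hc : ContinuousOn c (Set.Icc 0 T))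
    (hfc : ∀ t ∈ Set.Icc (0:ℝ) T, ∀ x y : ℝ, c t ≤ f t x y)
    (lam : ℝ) (hlam : lam ∈ Set.Icc (0:ℝ) 1)
    (u : ℝ → ℝ) (hu : ContDiff ℝ 1 u)
    (heq : ∀ t ∈ Set.Icc (0:ℝ) T,
      HasDerivAt (fun s => φ (deriv u s)) (lam * f t (u t) (deriv u t)) t)
    (hint : (∫ t in (0:ℝ)..T, f t (u t) (deriv u t)) = 0)
    (M₁ M₂ : ℝ) (hM : M₁ < M₂)
    (ω : ℝ) (hω : ω ∈ Set.Icc (0:ℝ) T)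
    (hω1 : M₁ < deriv u ω) (hω2 : deriv u ω < M₂) :
    ∀ t ∈ Set.Icc (0:ℝ) T,
      |φ (deriv u t)| <
        max |φ M₁| |φ M₂| + 2 * ∫ s in (0:ℝ)..T, max (-c s) 0 := by
  set g : ℝ → ℝ := fun t => f t (u t) (deriv u t) with hgdef
  have hud : Continuous (deriv u) := hu.continuous_deriv le_rfl
  have hgc : Continuous g :=
    hf.comp (continuous_id.prodMk (hu.continuous.prodMk hud))
  have hinj : Function.Injective φ := fun x y h => by
    rw [← hinv1 x, h, hinv1]
  -- |φ(u'(ω))| < L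
  have hL : |φ (deriv u ω)| < max |φ M₁| |φ M₂| := by
    have h1 := le_max_left |φ M₁| |φ M₂|
    have h2 := le_max_right |φ M₁| |φ M₂|
    have h3 := le_abs_self (φ M₁); have h4 := le_abs_self (φ M₂)
    have h5 := neg_abs_le (φ M₁); have h6 := neg_abs_le (φ M₂)
    rcases hφc.strictMono_of_inj hinj with h | h
    · have e1 : φ M₁ < φ (deriv u ω) := h hω1
      have e2 : φ (deriv u ω) < φ M₂ := h hω2
      rw [abs_lt]; constructor <;> linarith
    · have e1 : φ (deriv u ω) < φ M₁ := h hω1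
      have e2 : φ M₂ < φ (deriv u ω) := h hω2
      rw [abs_lt]; constructor <;> linarith
  -- integrability facts
  have hcneg : IntervalIntegrable (fun s => max (-c s) 0) volume 0 T := by
    apply ContinuousOn.intervalIntegrable
    rw [uIcc_of_le hT.le]
    exact fun x hx => (hc.neg x hx).max continuousWithinAt_const
  have hgI : ∀ x y : ℝ, IntervalIntegrable g volume x y := fun x y =>
    hgc.intervalIntegrable x y
  have hgaI : IntervalIntegrable (fun s => |g s|) volume 0 T :=
    hgc.abs.intervalIntegrable 0 T
  -- ∫₀ᵀ |g| ≤ 2 ∫₀ᵀ c⁻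
  have habs : (∫ s in (0:ℝ)..T, |g s|) ≤ 2 * ∫ s in (0:ℝ)..T, max (-c s) 0 := by
    have hmono : (∫ s in (0:ℝ)..T, |g s|)
        ≤ ∫ s in (0:ℝ)..T, (g s + 2 * max (-c s) 0) := by
      apply intervalIntegral.integral_mono_on hT.le hgaI
      · exact (hgI 0 T).add (hcneg.const_mul 2)
      · intro s hs
        have hcs := hfc s hs (u s) (deriv u s)
        have hm1 : -c s ≤ max (-c s) 0 := le_max_left _ _
        have hm2 : (0:ℝ) ≤ max (-c s) 0 := le_max_right _ _
        rcases abs_cases (g s) with ⟨he, _⟩ | ⟨he, _⟩ <;> rw [he] <;>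
          simp only [hgdef] at * <;> linarith
    rw [intervalIntegral.integral_add (hgI 0 T) (hcneg.const_mul 2),
      intervalIntegral.integral_const_mul] at hmono
    rw [hgdef] at hmono
    rw [hgdef] at hint ⊢
    simpa [hint] using hmono
  intro t ht
  -- FTC
  have hsub : ∀ s ∈ uIcc ω t, s ∈ Icc (0:ℝ) T := fun s hs =>
    Set.uIcc_subset_Icc hω ht hs
  have hftc : (∫ s in ω..t, lam * g s) = φ (deriv u t) - φ (deriv u ω) := by
    apply intervalIntegral.integral_eq_sub_of_hasDerivAt
    · intro s hs; exact heq s (hsub s hs)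
    · exact (continuous_const.mul hgc).intervalIntegrable ω t
  -- bound the increment
  have hlg : ∀ s, |lam * g s| ≤ |g s| := by
    intro s
    rw [abs_mul]
    calc |lam| * |g s| ≤ 1 * |g s| := by
          apply mul_le_mul_of_nonneg_right _ (abs_nonneg _)
          rw [abs_le]; exact ⟨by linarith [hlam.1], hlam.2⟩
      _ = |g s| := one_mul _
  have hbnd : |φ (deriv u t) - φ (deriv u ω)| ≤ ∫ s in (0:ℝ)..T, |g s| := by
    rw [← hftc]
    have hnn : (0:ℝ → ℝ) ≤ᶠ[ae (volume.restrict (Ioc (0:ℝ) T))] fun s => |g s| :=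
      Filter.Eventually.of_forall fun s => abs_nonneg _
    rcases le_total ω t with hwt | hwt
    · calc |∫ s in ω..t, lam * g s| ≤ ∫ s in ω..t, |lam * g s| :=
            intervalIntegral.abs_integral_le_integral_abs hwt
        _ ≤ ∫ s in ω..t, |g s| := by
            apply intervalIntegral.integral_mono_on hwt
              ((continuous_const.mul hgc).abs.intervalIntegrable ω t)
              (hgc.abs.intervalIntegrable ω t)
            exact fun s _ => hlg s
        _ ≤ ∫ s in (0:ℝ)..T, |g s| :=
            intervalIntegral.integral_mono_interval hω.1 hwt ht.2 hnn hgaI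
    · rw [intervalIntegral.integral_symm, abs_neg]
      calc |∫ s in t..ω, lam * g s| ≤ ∫ s in t..ω, |lam * g s| :=
            intervalIntegral.abs_integral_le_integral_abs hwt
        _ ≤ ∫ s in t..ω, |g s| := by
            apply intervalIntegral.integral_mono_on hwt
              ((continuous_const.mul hgc).abs.intervalIntegrable t ω)
              (hgc.abs.intervalIntegrable t ω)
            exact fun s _ => hlg s
        _ ≤ ∫ s in (0:ℝ)..T, |g s| :=
            intervalIntegral.integral_mono_interval ht.1 hwt hω.2 hnn hgaI
  have := abs_sub_abs_le_abs_sub (φ (deriv u t)) (φ (deriv u ω))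
  linarith
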